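/- In a graph with a valid distance labeling ℓ (ℓ(u) ≤ ℓ(v)+1 along residual arcs) together with a 'gap' at value g (no node has label exactly g, but some node has label greater than g), no node of label greater than g has a residual path to any node of label less than g. -/
import Mathlib

/-- Gap relabeling: if labels satisfy `ℓ u ≤ ℓ v + 1` along every residual arc, no node has
label exactly `g`, and some node has label above `g`, then no node of label above `g` has a
residual path to a node of label below `g`. -/
theorem stmt_16 {V : Type*} (A : V → V → Prop) (ℓ : V → ℕ) (g : ℕ)
    (harc : ∀ u v, A u v → ℓ u ≤ ℓ v + 1)
    (hgap : ∀ v, ℓ v ≠ g) (habove : ∃ v, g < ℓ v) :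
    ∀ u w, Relation.ReflTransGen A u w → g < ℓ u → g < ℓ w := by
  intro u w h hu
  induction h with
  | refl => exact hu
  | tail _ hbc ih =>
    have := harc _ _ hbc
    rcases lt_or_eq_of_le (Nat.le_of_lt_succ (lt_of_lt_of_le ih this)) with h' | h'
    · omega
    · exact absurd h'.symm (hgap _)
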